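/- arXiv:1909.05075 — 5 statements merged into one kernel-verified Lean document; each statement's English description precedes it below -/
import Mathlib

section
/- For every horizon m ≥ 0 and every state with 0 ≤ Σ ≤ n, n > 0, the Bernoulli one-armed-bandit value function satisfies W_m(Σ,n,γ,λ) ≥ max(Σ/n − λ, 0)/(1−γ). In particular, W_m(Σ,n,γ,λ) > 0 whenever λ < Σ/n. -/
/-- Finite-horizon value function of the Bernoulli one-armed bandit:
`W γ m Σ n λ`, with discount `γ`, horizon `m`, state `(Σ, n)` and safe-arm
reward `λ`. -/
noncomputable def W (γ : ℝ) : ℕ → ℝ → ℝ → ℝ → ℝ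
  | 0, S, n, lam => max (S / n - lam) 0 / (1 - γ)
  | m + 1, S, n, lam =>
      max (S / n - lam + γ * ((S / n) * W γ m (S + 1) (n + 1) lam +
        (1 - S / n) * W γ m S (n + 1) lam)) 0

private lemma conv_max (p a b lam : ℝ) (hp0 : 0 ≤ p) (hp1 : p ≤ 1) :
    max (p * a + (1 - p) * b - lam) 0 ≤
      p * max (a - lam) 0 + (1 - p) * max (b - lam) 0 := by
  have h1 : a - lam ≤ max (a - lam) 0 := le_max_left _ _
  have h2 : b - lam ≤ max (b - lam) 0 := le_max_left _ _
  have h3 : (0:ℝ) ≤ max (a - lam) 0 := le_max_right _ _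
  have h4 : (0:ℝ) ≤ max (b - lam) 0 := le_max_right _ _
  apply max_le
  · nlinarith
  · nlinarith

private lemma bmab_aux (γ lam : ℝ) (hγ0 : 0 ≤ γ) (hγ1 : γ < 1) :
    ∀ m : ℕ, ∀ S n : ℝ, 0 ≤ S → S ≤ n → 0 < n →
      max (S / n - lam) 0 / (1 - γ) ≤ W γ m S n lam := by
  intro m
  induction m with
  | zero => intro S n _ _ _; simp [W]
  | succ m ih =>
    intro S n hS hSn hn
    have hγ' : (0:ℝ) < 1 - γ := by linarith
    have hp0 : 0 ≤ S / n := div_nonneg hS hn.le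
    have hp1 : S / n ≤ 1 := (div_le_one hn).mpr hSn
    have IH1 := ih (S + 1) (n + 1) (by linarith) (by linarith) (by linarith)
    have IH2 := ih S (n + 1) hS (by linarith) (by linarith)
    have hmart : (S / n) * ((S + 1) / (n + 1)) + (1 - S / n) * (S / (n + 1)) = S / n := by
      field_simp; ring
    have hconv : max (S / n - lam) 0 / (1 - γ) ≤
        (S / n) * W γ m (S + 1) (n + 1) lam + (1 - S / n) * W γ m S (n + 1) lam := by
      have h := conv_max (S / n) ((S + 1) / (n + 1)) (S / (n + 1)) lam hp0 hp1
      rw [hmart] at h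
      calc max (S / n - lam) 0 / (1 - γ)
          ≤ ((S / n) * max ((S + 1) / (n + 1) - lam) 0
              + (1 - S / n) * max (S / (n + 1) - lam) 0) / (1 - γ) :=
            by gcongr
        _ = (S / n) * (max ((S + 1) / (n + 1) - lam) 0 / (1 - γ))
              + (1 - S / n) * (max (S / (n + 1) - lam) 0 / (1 - γ)) := by ring
        _ ≤ _ := by
            gcongr <;>
              first
                | exact div_nonneg (le_max_right _ _) hγ'.le
                | linarith
                | exact IH1
                | exact IH2
    show max (S / n - lam) 0 / (1 - γ) ≤ max (S / n - lam + γ * _) 0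
    rcases le_or_gt (S / n - lam) 0 with h | h
    · rw [max_eq_right h, zero_div]
      exact le_max_right _ _
    · rw [max_eq_left h.le] at hconv ⊢
      refine le_trans ?_ (le_max_left _ _)
      have : γ * ((S / n - lam) / (1 - γ)) ≤ γ * _ := mul_le_mul_of_nonneg_left hconv hγ0
      have heq : S / n - lam + γ * ((S / n - lam) / (1 - γ)) = (S / n - lam) / (1 - γ) := by
        field_simp; ring
      linarith

/-- For every horizon `m` and state with `0 ≤ Σ ≤ n`, `n > 0`, the value
satisfies `W_m(Σ,n,γ,λ) ≥ max(Σ/n − λ, 0)/(1−γ)`; in particular it is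
positive whenever `λ < Σ/n`. -/
theorem bmab_value_lower_bound (γ lam S n : ℝ)
    (hγ0 : 0 ≤ γ) (hγ1 : γ < 1) (hS : 0 ≤ S) (hSn : S ≤ n) (hn : 0 < n) :
    ∀ m : ℕ, max (S / n - lam) 0 / (1 - γ) ≤ W γ m S n lam ∧
      (lam < S / n → 0 < W γ m S n lam) := by
  intro m
  have h := bmab_aux γ lam hγ0 hγ1 m S n hS hSn hn
  refine ⟨h, fun hlam => lt_of_lt_of_le ?_ h⟩
  have : 0 < S / n - lam := by linarith
  rw [max_eq_left this.le]
  exact div_pos this (by linarith)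
end

section
/- For every horizon m ≥ 0 and every state with 0 ≤ Σ ≤ n, n > 0, the map λ ↦ W_m(Σ,n,γ,λ) is Lipschitz continuous with Lipschitz constant 1/(1−γ): for all λ, λ' ∈ ℝ, |W_m(Σ,n,γ,λ) − W_m(Σ,n,γ,λ')| ≤ |λ − λ'|/(1−γ). -/
lemma W_lip_aux (γ : ℝ) (hγ0 : 0 ≤ γ) (hγ1 : γ < 1) :
    ∀ m : ℕ, ∀ S n : ℝ, 0 ≤ S → S ≤ n → 0 < n → ∀ lam lam' : ℝ,
      |W γ m S n lam - W γ m S n lam'| ≤ |lam - lam'| / (1 - γ) := by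
  have h1γ : 0 < 1 - γ := by linarith
  intro m
  induction m with
  | zero =>
    intro S n hS hSn hn lam lam'
    simp only [W]
    rw [div_sub_div_same, abs_div, abs_of_pos h1γ]
    refine div_le_div_of_nonneg_right ?_ h1γ.le |>.trans_eq rfl
    have h := abs_max_sub_max_le_abs (S / n - lam) (S / n - lam') 0
    calc |max (S / n - lam) 0 - max (S / n - lam') 0|
        ≤ |(S / n - lam) - (S / n - lam')| := h
      _ = |lam - lam'| := by rw [show (S / n - lam) - (S / n - lam') = -(lam - lam') by ring,
          abs_neg]
  | succ m ih =>
    intro S n hS hSn hn lam lam'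
    have hp0 : 0 ≤ S / n := div_nonneg hS hn.le
    have hp1 : S / n ≤ 1 := (div_le_one hn).mpr hSn
    have h1 := ih (S + 1) (n + 1) (by linarith) (by linarith) (by linarith) lam lam'
    have h2 := ih S (n + 1) hS (by linarith) (by linarith) lam lam'
    simp only [W]
    set L := |lam - lam'| / (1 - γ) with hL
    have hLl : |lam - lam'| = L * (1 - γ) := by rw [hL, div_mul_cancel₀ _ h1γ.ne']
    calc |max (S / n - lam + γ * ((S / n) * W γ m (S + 1) (n + 1) lam +
            (1 - S / n) * W γ m S (n + 1) lam)) 0 -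
          max (S / n - lam' + γ * ((S / n) * W γ m (S + 1) (n + 1) lam' +
            (1 - S / n) * W γ m S (n + 1) lam')) 0|
        ≤ |(S / n - lam + γ * ((S / n) * W γ m (S + 1) (n + 1) lam +
            (1 - S / n) * W γ m S (n + 1) lam)) -
           (S / n - lam' + γ * ((S / n) * W γ m (S + 1) (n + 1) lam' +
            (1 - S / n) * W γ m S (n + 1) lam'))| := abs_max_sub_max_le_abs _ _ 0
      _ = |(lam' - lam) + γ * ((S / n) * (W γ m (S + 1) (n + 1) lam -
              W γ m (S + 1) (n + 1) lam') +
            (1 - S / n) * (W γ m S (n + 1) lam - W γ m S (n + 1) lam'))| := by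
          ring_nf
      _ ≤ |lam' - lam| + γ * ((S / n) * |W γ m (S + 1) (n + 1) lam -
              W γ m (S + 1) (n + 1) lam'| +
            (1 - S / n) * |W γ m S (n + 1) lam - W γ m S (n + 1) lam'|) := by
          refine (abs_add_le _ _).trans (add_le_add_right ?_ _)
          rw [abs_mul, abs_of_nonneg hγ0]
          refine mul_le_mul_of_nonneg_left ((abs_add_le _ _).trans ?_) hγ0
          rw [abs_mul, abs_mul, abs_of_nonneg hp0, abs_of_nonneg (by linarith : (0:ℝ) ≤ 1 - S / n)]
      _ ≤ |lam - lam'| + γ * ((S / n) * L + (1 - S / n) * L) := by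
          rw [show |lam' - lam| = |lam - lam'| by rw [← abs_neg]; ring_nf]
          gcongr
      _ = L * (1 - γ) + γ * L := by rw [← hLl]; ring
      _ = L := by ring

/-- For every horizon `m` and state with `0 ≤ Σ ≤ n`, `n > 0`, the map
`λ ↦ W_m(Σ,n,γ,λ)` is Lipschitz with constant `1/(1−γ)`. -/
theorem bmab_value_lipschitz_in_lambda (γ S n : ℝ)
    (hγ0 : 0 ≤ γ) (hγ1 : γ < 1) (hS : 0 ≤ S) (hSn : S ≤ n) (hn : 0 < n) :
    ∀ m : ℕ, ∀ lam lam' : ℝ,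
      |W γ m S n lam - W γ m S n lam'| ≤ |lam - lam'| / (1 - γ) := by
  intro m lam lam'
  exact W_lip_aux γ hγ0 hγ1 m S n hS hSn hn lam lam'
end

section
/- For every horizon m ≥ 0, the Bernoulli one-armed-bandit value function is nondecreasing in the Bayesian sum of rewards: if 0 ≤ Σ ≤ Σ' ≤ n and n > 0, then W_m(Σ,n,γ,λ) ≤ W_m(Σ',n,γ,λ). -/
/-- For every horizon `m`, the value is nondecreasing in the Bayesian sum of
rewards: if `0 ≤ Σ ≤ Σ' ≤ n` and `n > 0` then
`W_m(Σ,n,γ,λ) ≤ W_m(Σ',n,γ,λ)`. -/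
theorem bmab_value_monotone_in_sigma (γ lam : ℝ)
    (hγ0 : 0 ≤ γ) (hγ1 : γ < 1) :
    ∀ m : ℕ, ∀ S S' n : ℝ, 0 ≤ S → S ≤ S' → S' ≤ n → 0 < n →
      W γ m S n lam ≤ W γ m S' n lam := by
  intro m
  induction m with
  | zero =>
    intro S S' n h0 h1 h2 hn
    simp only [W]
    have h1γ : (0:ℝ) < 1 - γ := by linarith
    have : S / n ≤ S' / n := by gcongr
    gcongr
  | succ m ih =>
    intro S S' n h0 h1 h2 hn
    simp only [W]
    apply max_le_max _ le_rfl
    have hp : S / n ≤ S' / n := by gcongr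
    have hp0 : 0 ≤ S / n := div_nonneg h0 hn.le
    have hp1 : S' / n ≤ 1 := by
      rw [div_le_one hn]; exact h2
    have hA : W γ m (S + 1) (n + 1) lam ≤ W γ m (S' + 1) (n + 1) lam :=
      ih (S + 1) (S' + 1) (n + 1) (by linarith) (by linarith) (by linarith) (by linarith)
    have hB : W γ m S (n + 1) lam ≤ W γ m S' (n + 1) lam :=
      ih S S' (n + 1) h0 h1 (by linarith) (by linarith)
    have hBA : W γ m S (n + 1) lam ≤ W γ m (S + 1) (n + 1) lam :=
      ih S (S + 1) (n + 1) h0 (by linarith) (by linarith) (by linarith)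
    set p := S / n
    set p' := S' / n
    set A := W γ m (S + 1) (n + 1) lam
    set A' := W γ m (S' + 1) (n + 1) lam
    set B := W γ m S (n + 1) lam
    set B' := W γ m S' (n + 1) lam
    have key : p * A + (1 - p) * B ≤ p' * A' + (1 - p') * B' := by
      nlinarith [mul_nonneg (sub_nonneg.2 hp) (sub_nonneg.2 hBA),
        mul_nonneg (le_trans hp0 hp) (sub_nonneg.2 hA),
        mul_nonneg (sub_nonneg.2 hp1) (sub_nonneg.2 hB)]
    nlinarith [mul_le_mul_of_nonneg_left key hγ0]
end

section
/- Fix a horizon N ≥ 0 and a state with 0 ≤ Σ ≤ n, n > 0, and define the (finite-horizon) Gittins index ν := sInf{λ ∈ ℝ : W_N(Σ,n,γ,λ) = 0}. Then Σ/n ≤ ν ≤ 1, the infimum is attained (W_N(Σ,n,γ,ν) = 0), and W_N(Σ,n,γ,λ) > 0 for every λ < ν. -/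
lemma W_nonneg (γ : ℝ) (hγ1 : γ < 1) (m : ℕ) (S n lam : ℝ) :
    0 ≤ W γ m S n lam := by
  cases m with
  | zero => exact div_nonneg (le_max_right _ _) (by linarith)
  | succ m => exact le_max_right _ _

lemma W_pos (γ : ℝ) (hγ0 : 0 ≤ γ) (hγ1 : γ < 1) (m : ℕ) (S n lam : ℝ)
    (hS : 0 ≤ S) (hSn : S ≤ n) (hn : 0 < n) (hlam : lam < S / n) :
    0 < W γ m S n lam := by
  have h0 : 0 ≤ S / n := div_nonneg hS hn.le
  have h1 : S / n ≤ 1 := (div_le_one hn).2 hSn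
  cases m with
  | zero =>
    simp only [W]
    rw [max_eq_left (by linarith)]
    exact div_pos (by linarith) (by linarith)
  | succ m =>
    simp only [W]
    have hA : 0 ≤ (S / n) * W γ m (S + 1) (n + 1) lam +
        (1 - S / n) * W γ m S (n + 1) lam := by
      have := W_nonneg γ hγ1 m (S + 1) (n + 1) lam
      have := W_nonneg γ hγ1 m S (n + 1) lam
      nlinarith
    have : 0 < S / n - lam + γ * ((S / n) * W γ m (S + 1) (n + 1) lam +
        (1 - S / n) * W γ m S (n + 1) lam) := by nlinarith
    exact lt_max_iff.2 (Or.inl this)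

lemma W_zero (γ : ℝ) (hγ0 : 0 ≤ γ) (hγ1 : γ < 1) (m : ℕ) :
    ∀ S n lam : ℝ, 0 ≤ S → S ≤ n → 0 < n → 1 ≤ lam →
    W γ m S n lam = 0 := by
  induction m with
  | zero =>
    intro S n lam hS hSn hn hlam
    have h1 : S / n ≤ 1 := (div_le_one hn).2 hSn
    simp only [W]
    rw [max_eq_right (by linarith)]
    simp
  | succ m ih =>
    intro S n lam hS hSn hn hlam
    have h1 : S / n ≤ 1 := (div_le_one hn).2 hSn
    simp only [W]
    rw [ih (S + 1) (n + 1) lam (by linarith) (by linarith) (by linarith) hlam,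
      ih S (n + 1) lam hS (by linarith) (by linarith) hlam]
    rw [max_eq_right (by nlinarith)]

lemma W_continuous (γ : ℝ) (m : ℕ) (S n : ℝ) :
    Continuous (fun lam => W γ m S n lam) := by
  induction m generalizing S n with
  | zero =>
    simp only [W]
    exact (((continuous_const.sub continuous_id).max continuous_const).div_const _)
  | succ m ih =>
    simp only [W]
    exact (((continuous_const.sub continuous_id).add (continuous_const.mul
      ((continuous_const.mul (ih (S + 1) (n + 1))).add
        (continuous_const.mul (ih S (n + 1)))))).max continuous_const)

/-- For a fixed horizon `N` and state with `0 ≤ Σ ≤ n`, `n > 0`, the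
finite-horizon Gittins index `ν = sInf {λ | W_N(Σ,n,γ,λ) = 0}` satisfies
`Σ/n ≤ ν ≤ 1`, the infimum is attained, and `W_N(Σ,n,γ,λ) > 0` for every
`λ < ν`. -/
theorem bmab_gittins_index_properties (γ S n : ℝ) (N : ℕ)
    (hγ0 : 0 ≤ γ) (hγ1 : γ < 1) (hS : 0 ≤ S) (hSn : S ≤ n) (hn : 0 < n) :
    S / n ≤ sInf {lam : ℝ | W γ N S n lam = 0} ∧
    sInf {lam : ℝ | W γ N S n lam = 0} ≤ 1 ∧
    W γ N S n (sInf {lam : ℝ | W γ N S n lam = 0}) = 0 ∧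
    ∀ lam : ℝ, lam < sInf {lam : ℝ | W γ N S n lam = 0} →
      0 < W γ N S n lam := by
  set A : Set ℝ := {lam : ℝ | W γ N S n lam = 0} with hA
  have hmem : (1 : ℝ) ∈ A := W_zero γ hγ0 hγ1 N S n 1 hS hSn hn le_rfl
  have hne : A.Nonempty := ⟨1, hmem⟩
  have hlb : ∀ lam ∈ A, S / n ≤ lam := by
    intro lam hl
    by_contra h
    exact (W_pos γ hγ0 hγ1 N S n lam hS hSn hn (lt_of_not_ge h)).ne' hl
  have hbdd : BddBelow A := ⟨S / n, hlb⟩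
  have hclosed : IsClosed A :=
    isClosed_eq (W_continuous γ N S n) continuous_const
  have hinf_mem : sInf A ∈ A := hclosed.csInf_mem hne hbdd
  refine ⟨le_csInf hne hlb, csInf_le hbdd hmem, hinf_mem, ?_⟩
  intro lam hl
  have : lam ∉ A := fun h => absurd (csInf_le hbdd h) (not_le.2 hl)
  exact lt_of_le_of_ne (W_nonneg γ hγ1 N S n lam) (fun h => this h.symm)
end

section
/- (Retirement below the initial mean loses nothing) With U and Ũ as defined in the context, U_0(μ_a) = 0 if and only if Ũ_0(μ_a) = 0. That is, modifying the Gaussian one-armed-bandit dynamic programme to retire (assign value 0) in every state whose posterior mean lies strictly below the initial mean μ_a does not change whether the value at the initial state (μ_a, n_a) is zero, and hence does not change the Gittins index computed by calibration. -/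
open MeasureTheory ProbabilityTheory Real

/-- Stage-indexed value functions of the Gaussian one-armed bandit, indexed by
the number `d` of remaining stages and the current Bayesian number of
observations `n`: `U γ τ lam d n μ` is the value `U_j(μ)` of the paper with
`d = N − j` and `n = n_j = n_a + jτ` (so `U_N` is the terminal value and
`U_0(μ_a) = U γ τ lam N n_a μ_a`). -/
noncomputable def U (γ τ lam : ℝ) : ℕ → ℝ → ℝ → ℝ
  | 0, _n, μ => max (μ - lam) 0 / (1 - γ)
  | d + 1, n, μ =>
      max (μ - lam + γ * ∫ y, U γ τ lam d (n + τ) ((n * μ + τ * y) / (n + τ))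
        ∂(gaussianReal μ (1 / n + 1 / τ).toNNReal)) 0

/-- The modified value functions `Ũ_j`, following the same recursion as `U`
except that the value is set to `0` (retirement) in every state whose
posterior mean lies strictly below the initial mean `μ_a`, at every stage
including the terminal one. -/
noncomputable def Umod (γ τ lam μa : ℝ) : ℕ → ℝ → ℝ → ℝ
  | 0, _n, μ => if μ < μa then 0 else max (μ - lam) 0 / (1 - γ)
  | d + 1, n, μ =>
      if μ < μa then 0 else
      max (μ - lam + γ * ∫ y, Umod γ τ lam μa d (n + τ) ((n * μ + τ * y) / (n + τ))
        ∂(gaussianReal μ (1 / n + 1 / τ).toNNReal)) 0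


noncomputable def std : Measure ℝ := gaussianReal 0 1

instance : IsProbabilityMeasure std := by unfold std; infer_instance

lemma std_map_neg : std.map (fun x => -x) = std := by
  have h : (fun x : ℝ => -x) = ((-1 : ℝ) * ·) := by funext x; simp
  rw [std, h, gaussianReal_map_const_mul]
  norm_num

lemma integral_neg_std (f : ℝ → ℝ) : ∫ z, f (-z) ∂std = ∫ z, f z ∂std := by
  have hemb : MeasurableEmbedding (fun x : ℝ => -x) := by
    have h : (fun x : ℝ => -x) = ((-1 : ℝ) * ·) := by funext x; simp
    rw [h]; exact measurableEmbedding_mulLeft₀ (by norm_num)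
  rw [← hemb.integral_map, std_map_neg]

lemma integrable_id_std : Integrable (fun x : ℝ => x) std := by
  rw [std, gaussianReal_of_var_ne_zero _ one_ne_zero]
  rw [integrable_withDensity_iff (measurable_gaussianPDF _ _) (ae_of_all _ fun x => ENNReal.ofReal_lt_top)]
  have : (fun x : ℝ => x * (gaussianPDF 0 1 x).toReal)
      = fun x : ℝ => (Real.sqrt (2 * π * 1))⁻¹ * (x * Real.exp (-(2 * 1)⁻¹ * x ^ 2)) := by
    funext x
    rw [gaussianPDF, ENNReal.toReal_ofReal (gaussianPDFReal_nonneg _ _ _), gaussianPDFReal]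
    push_cast
    ring_nf
  rw [this]
  exact (integrable_mul_exp_neg_mul_sq (by norm_num)).const_mul _

lemma integral_id_std : ∫ x, x ∂std = 0 := by
  have h := integral_neg_std (fun x => x)
  have : ∫ (z : ℝ), -z ∂std = - ∫ z, z ∂std := integral_neg _
  linarith [h.symm.trans this]

/-- Posterior-mean scale factor. -/
noncomputable def sc (τ n : ℝ) : ℝ := Real.sqrt (τ / (n * (n + τ)))

lemma sc_nonneg (τ n : ℝ) : 0 ≤ sc τ n := Real.sqrt_nonneg _

lemma sc_anti {τ n m : ℝ} (hτ : 0 < τ) (hn : 0 < n) (hnm : n ≤ m) : sc τ m ≤ sc τ n := by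
  apply Real.sqrt_le_sqrt
  have hm : 0 < m := lt_of_lt_of_le hn hnm
  have hm : 0 < m := lt_of_lt_of_le hn hnm
  apply div_le_div_of_nonneg_left hτ.le (by positivity)
  nlinarith

lemma integral_post (γ' τ n μ : ℝ) (hτ : 0 < τ) (hn : 0 < n) (f : ℝ → ℝ) :
    ∫ y, f ((n * μ + τ * y) / (n + τ)) ∂(gaussianReal μ (1 / n + 1 / τ).toNNReal)
      = ∫ z, f (μ + sc τ n * z) ∂std := by
  set c : ℝ := Real.sqrt (1 / n + 1 / τ) with hc
  have hcpos : 0 < c := Real.sqrt_pos.mpr (by positivity)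
  have h1 : gaussianReal μ (1 / n + 1 / τ).toNNReal
      = (std.map (c * ·)).map (· + μ) := by
    rw [std, gaussianReal_map_const_mul, mul_zero, gaussianReal_map_add_const, zero_add]
    congr 1
    ext
    push_cast
    rw [Real.sq_sqrt (by positivity)]
    simp only [Real.toNNReal, one_div, NNReal.coe_mk, mul_one]
    exact max_eq_left (by positivity)
  rw [h1, (measurableEmbedding_addRight μ).integral_map,
    (measurableEmbedding_mulLeft₀ hcpos.ne').integral_map]
  congr 1
  funext z
  congr 1
  have hs : sc τ n = τ * c / (n + τ) := by
    rw [sc, hc]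
    rw [show τ / (n * (n + τ)) = (τ / (n+τ))^2 * (1/n + 1/τ) by field_simp; ring]
    rw [Real.sqrt_mul (by positivity), Real.sqrt_sq (by positivity)]
    ring
  rw [hs]
  field_simp
  ring

noncomputable def K1 : ℝ := ∫ x, |x| ∂std

lemma K1_nonneg : 0 ≤ K1 := integral_nonneg fun x => abs_nonneg x

lemma integrable_abs_std : Integrable (fun x : ℝ => |x|) std := integrable_id_std.abs

lemma integral_abs_std : ∫ x, |x| ∂std = K1 := rfl

section main

variable {γ τ lam μa na : ℝ}

/-- Linear-growth constants. -/
noncomputable def Bc (γ lam τ na : ℝ) : ℕ → ℝ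
  | 0 => (1 + |lam|) / (1 - γ)
  | d + 1 => (1 + |lam|) + Bc γ lam τ na d * (1 + sc τ na * K1)

lemma Bc_nonneg (hγ1 : γ < 1) : ∀ d, 0 ≤ Bc γ lam τ na d
  | 0 => by
      rw [Bc]
      have h1 : (0:ℝ) < 1 - γ := by linarith
      positivity
  | d + 1 => by
      rw [Bc]
      have := Bc_nonneg hγ1 d
      have := sc_nonneg τ na
      have := K1_nonneg
      positivity

lemma U_zero (γ τ lam n μ : ℝ) : U γ τ lam 0 n μ = max (μ - lam) 0 / (1 - γ) := rfl

lemma U_succ (γ τ lam : ℝ) (d : ℕ) (n μ : ℝ) (hτ : 0 < τ) (hn : 0 < n) :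
    U γ τ lam (d + 1) n μ
      = max (μ - lam + γ * ∫ z, U γ τ lam d (n + τ) (μ + sc τ n * z) ∂std) 0 := by
  show max (μ - lam + γ * ∫ y, U γ τ lam d (n + τ) ((n * μ + τ * y) / (n + τ))
        ∂(gaussianReal μ (1 / n + 1 / τ).toNNReal)) 0 = _
  rw [integral_post γ τ n μ hτ hn]

lemma Umod_zero (γ τ lam μa n μ : ℝ) :
    Umod γ τ lam μa 0 n μ = if μ < μa then 0 else max (μ - lam) 0 / (1 - γ) := rfl

lemma Umod_succ (γ τ lam μa : ℝ) (d : ℕ) (n μ : ℝ) (hτ : 0 < τ) (hn : 0 < n) :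
    Umod γ τ lam μa (d + 1) n μ
      = if μ < μa then 0 else
        max (μ - lam + γ * ∫ z, Umod γ τ lam μa d (n + τ) (μ + sc τ n * z) ∂std) 0 := by
  show (if μ < μa then 0 else
      max (μ - lam + γ * ∫ y, Umod γ τ lam μa d (n + τ) ((n * μ + τ * y) / (n + τ))
        ∂(gaussianReal μ (1 / n + 1 / τ).toNNReal)) 0) = _
  rw [integral_post γ τ n μ hτ hn]

lemma U_nonneg (hγ1 : γ < 1) : ∀ (d : ℕ) (n μ : ℝ), 0 ≤ U γ τ lam d n μ
  | 0, n, μ => by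
      rw [U_zero]
      have : (0:ℝ) < 1 - γ := by linarith
      positivity
  | d + 1, n, μ => le_max_right _ _

lemma Umod_nonneg (hγ1 : γ < 1) : ∀ (d : ℕ) (n μ : ℝ), 0 ≤ Umod γ τ lam μa d n μ
  | 0, n, μ => by
      rw [Umod_zero]
      split
      · exact le_rfl
      · have : (0:ℝ) < 1 - γ := by linarith
        positivity
  | d + 1, n, μ => by
      show (0:ℝ) ≤ if μ < μa then 0 else max _ 0
      split
      · exact le_rfl
      · exact le_max_right _ _

lemma integrable_lin (A C : ℝ) : Integrable (fun z : ℝ => A + C * |z|) std :=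
  (integrable_const A).add (integrable_abs_std.const_mul C)

lemma integral_lin (A C : ℝ) : ∫ z, (A + C * |z|) ∂std = A + C * K1 := by
  rw [integral_add (integrable_const A) (integrable_abs_std.const_mul C),
    integral_const, integral_const_mul, integral_abs_std]
  simp [measure_univ]

lemma U_le_bound (hγ0 : 0 ≤ γ) (hγ1 : γ < 1) (hτ : 0 < τ) (hna : 0 < na) :
    ∀ (d : ℕ) (n μ : ℝ), na ≤ n → U γ τ lam d n μ ≤ Bc γ lam τ na d * (1 + |μ|)
  | 0, n, μ, _hn => by
      rw [U_zero, Bc, div_mul_eq_mul_div]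
      have h1 : (0:ℝ) < 1 - γ := by linarith
      have h2 : max (μ - lam) 0 ≤ (1 + |lam|) * (1 + |μ|) := by
        apply max_le
        · nlinarith [le_abs_self μ, neg_abs_le lam, abs_nonneg μ, abs_nonneg lam]
        · positivity
      exact div_le_div_of_nonneg_right h2 h1.le
  | d + 1, n, μ, hn => by
      have hn0 : 0 < n := lt_of_lt_of_le hna hn
      rw [U_succ _ _ _ _ _ _ hτ hn0]
      have hB := Bc_nonneg (lam := lam) (τ := τ) (na := na) hγ1 d
      have hscna := sc_nonneg τ na
      have hsc := sc_nonneg τ n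
      have hscle : sc τ n ≤ sc τ na := sc_anti hτ hna hn
      have hK := K1_nonneg
      set A := Bc γ lam τ na d * (1 + |μ|) with hA
      set C := Bc γ lam τ na d * sc τ na with hC
      have hI : (∫ z, U γ τ lam d (n + τ) (μ + sc τ n * z) ∂std) ≤ A + C * K1 := by
        rw [← integral_lin A C]
        apply integral_mono_of_nonneg
        · exact ae_of_all _ fun z => U_nonneg hγ1 d (n + τ) _
        · exact integrable_lin A C
        · refine ae_of_all _ fun z => ?_
          have h1 : U γ τ lam d (n + τ) (μ + sc τ n * z)
              ≤ Bc γ lam τ na d * (1 + |μ + sc τ n * z|) :=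
            U_le_bound hγ0 hγ1 hτ hna d (n + τ) _ (by linarith)
          have h2 : |μ + sc τ n * z| ≤ |μ| + sc τ na * |z| := by
            calc |μ + sc τ n * z| ≤ |μ| + |sc τ n * z| := abs_add_le _ _
            _ ≤ |μ| + sc τ na * |z| := by
                rw [abs_mul, abs_of_nonneg hsc]
                have := abs_nonneg z
                nlinarith
          show U γ τ lam d (n + τ) (μ + sc τ n * z) ≤ A + C * |z|
          rw [hA, hC]
          nlinarith [mul_le_mul_of_nonneg_left h2 hB, abs_nonneg z]
      have hInn : 0 ≤ ∫ z, U γ τ lam d (n + τ) (μ + sc τ n * z) ∂std :=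
        integral_nonneg fun z => U_nonneg hγ1 d (n + τ) _
      rw [Bc]
      apply max_le
      · have h3 : μ - lam ≤ (1 + |lam|) * (1 + |μ|) - 1 := by
          nlinarith [le_abs_self μ, neg_abs_le lam, abs_nonneg μ, abs_nonneg lam]
        have h4 : γ * (∫ z, U γ τ lam d (n + τ) (μ + sc τ n * z) ∂std) ≤ A + C * K1 := by
          nlinarith
        have h5 : A + C * K1 ≤ Bc γ lam τ na d * (1 + sc τ na * K1) * (1 + |μ|) := by
          rw [hA, hC]
          nlinarith [mul_nonneg (mul_nonneg (mul_nonneg hB hscna) hK) (abs_nonneg μ)]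
        nlinarith [abs_nonneg μ]
      · have := abs_nonneg μ
        positivity

lemma U_mono (hγ0 : 0 ≤ γ) (hγ1 : γ < 1) (hτ : 0 < τ) (hna : 0 < na) :
    ∀ (d : ℕ) (n : ℝ), na ≤ n → Monotone (U γ τ lam d n)
  | 0, n, _hn => by
      intro μ1 μ2 h12
      rw [U_zero, U_zero]
      have h1 : (0:ℝ) < 1 - γ := by linarith
      apply div_le_div_of_nonneg_right _ h1.le
      exact max_le_max (by linarith) le_rfl
  | d + 1, n, hn => by
      intro μ1 μ2 h12
      have hn0 : 0 < n := lt_of_lt_of_le hna hn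
      rw [U_succ _ _ _ _ _ _ hτ hn0, U_succ _ _ _ _ _ _ hτ hn0]
      have hmono := U_mono hγ0 hγ1 hτ hna d (n + τ) (by linarith)
      have hint : Integrable (fun z => U γ τ lam d (n + τ) (μ2 + sc τ n * z)) std := by
        apply Integrable.mono' (integrable_lin (Bc γ lam τ na d * (1 + |μ2|))
          (Bc γ lam τ na d * sc τ na))
        · exact (hmono.measurable.comp
            (measurable_const.add (measurable_const.mul measurable_id))).aestronglyMeasurable
        · refine ae_of_all _ fun z => ?_
          rw [Real.norm_eq_abs, abs_of_nonneg (U_nonneg hγ1 _ _ _)]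
          have h1 := U_le_bound (lam := lam) hγ0 hγ1 hτ hna d (n + τ) (μ2 + sc τ n * z) (by linarith)
          have h2 : |μ2 + sc τ n * z| ≤ |μ2| + sc τ na * |z| := by
            calc |μ2 + sc τ n * z| ≤ |μ2| + |sc τ n * z| := abs_add_le _ _
            _ ≤ |μ2| + sc τ na * |z| := by
                rw [abs_mul, abs_of_nonneg (sc_nonneg τ n)]
                have := abs_nonneg z
                nlinarith [sc_anti hτ hna hn, sc_nonneg τ n]
          have hB := Bc_nonneg (lam := lam) (τ := τ) (na := na) hγ1 d
          nlinarith [mul_le_mul_of_nonneg_left h2 hB]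
      apply max_le_max _ le_rfl
      have hI : (∫ z, U γ τ lam d (n + τ) (μ1 + sc τ n * z) ∂std)
          ≤ ∫ z, U γ τ lam d (n + τ) (μ2 + sc τ n * z) ∂std := by
        apply integral_mono_of_nonneg
        · exact ae_of_all _ fun z => U_nonneg hγ1 d (n + τ) _
        · exact hint
        · exact ae_of_all _ fun z => hmono (by nlinarith [sc_nonneg τ n])
      nlinarith

lemma U_int (hγ0 : 0 ≤ γ) (hγ1 : γ < 1) (hτ : 0 < τ) (hna : 0 < na)
    (d : ℕ) (n μ σ : ℝ) (hn : na ≤ n) (hσ : |σ| ≤ sc τ na) :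
    Integrable (fun z => U γ τ lam d n (μ + σ * z)) std := by
  apply Integrable.mono' (integrable_lin (Bc γ lam τ na d * (1 + |μ|))
    (Bc γ lam τ na d * sc τ na))
  · exact ((U_mono hγ0 hγ1 hτ hna d n hn).measurable.comp
      (measurable_const.add (measurable_const.mul measurable_id))).aestronglyMeasurable
  · refine ae_of_all _ fun z => ?_
    rw [Real.norm_eq_abs, abs_of_nonneg (U_nonneg hγ1 _ _ _)]
    have h1 := U_le_bound (lam := lam) hγ0 hγ1 hτ hna d n (μ + σ * z) hn
    have h2 : |μ + σ * z| ≤ |μ| + sc τ na * |z| := by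
      calc |μ + σ * z| ≤ |μ| + |σ * z| := abs_add_le _ _
      _ ≤ |μ| + sc τ na * |z| := by
          rw [abs_mul]
          have := abs_nonneg z
          nlinarith [abs_nonneg σ]
    have hB := Bc_nonneg (lam := lam) (τ := τ) (na := na) hγ1 d
    nlinarith [mul_le_mul_of_nonneg_left h2 hB]

lemma Umod_le_U (hγ0 : 0 ≤ γ) (hγ1 : γ < 1) (hτ : 0 < τ) (hna : 0 < na) :
    ∀ (d : ℕ) (n μ : ℝ), na ≤ n → Umod γ τ lam μa d n μ ≤ U γ τ lam d n μ
  | 0, n, μ, _hn => by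
      rw [U_zero, Umod_zero]
      split
      · have h1 : (0:ℝ) < 1 - γ := by linarith
        positivity
      · exact le_rfl
  | d + 1, n, μ, hn => by
      have hn0 : 0 < n := lt_of_lt_of_le hna hn
      rw [U_succ _ _ _ _ _ _ hτ hn0, Umod_succ _ _ _ _ _ _ _ hτ hn0]
      split
      · exact le_max_right _ _
      · apply max_le_max _ le_rfl
        have hI : (∫ z, Umod γ τ lam μa d (n + τ) (μ + sc τ n * z) ∂std)
            ≤ ∫ z, U γ τ lam d (n + τ) (μ + sc τ n * z) ∂std := by
          apply integral_mono_of_nonneg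
          · exact ae_of_all _ fun z => Umod_nonneg hγ1 d (n + τ) _
          · exact U_int hγ0 hγ1 hτ hna d (n + τ) μ (sc τ n) (by linarith)
              (by rw [abs_of_nonneg (sc_nonneg τ n)]; exact sc_anti hτ hna hn)
          · exact ae_of_all _ fun z => Umod_le_U hγ0 hγ1 hτ hna d (n + τ) _ (by linarith)
        nlinarith

lemma Umod_mono (hγ0 : 0 ≤ γ) (hγ1 : γ < 1) (hτ : 0 < τ) (hna : 0 < na) :
    ∀ (d : ℕ) (n : ℝ), na ≤ n → Monotone (Umod γ τ lam μa d n)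
  | 0, n, _hn => by
      intro μ1 μ2 h12
      rw [Umod_zero, Umod_zero]
      have h1 : (0:ℝ) < 1 - γ := by linarith
      split
      · split
        · exact le_rfl
        · positivity
      · have h2 : ¬ μ2 < μa := by intro h; exact ‹¬ μ1 < μa› (by linarith)
        rw [if_neg h2]
        apply div_le_div_of_nonneg_right _ h1.le
        exact max_le_max (by linarith) le_rfl
  | d + 1, n, hn => by
      intro μ1 μ2 h12
      have hn0 : 0 < n := lt_of_lt_of_le hna hn
      rw [Umod_succ _ _ _ _ _ _ _ hτ hn0, Umod_succ _ _ _ _ _ _ _ hτ hn0]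
      have hmono := Umod_mono hγ0 hγ1 hτ hna d (n + τ) (by linarith)
      split
      · split
        · exact le_rfl
        · exact le_max_right _ _
      · have h2 : ¬ μ2 < μa := by intro h; exact ‹¬ μ1 < μa› (by linarith)
        rw [if_neg h2]
        apply max_le_max _ le_rfl
        have hscn : |sc τ n| ≤ sc τ na := by
          rw [abs_of_nonneg (sc_nonneg τ n)]; exact sc_anti hτ hna hn
        have hint : Integrable (fun z => Umod γ τ lam μa d (n + τ) (μ2 + sc τ n * z)) std := by
          apply Integrable.mono' (U_int hγ0 hγ1 hτ hna d (n + τ) μ2 (sc τ n) (by linarith) hscn)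
          · exact (hmono.measurable.comp
              (measurable_const.add (measurable_const.mul measurable_id))).aestronglyMeasurable
          · refine ae_of_all _ fun z => ?_
            rw [Real.norm_eq_abs, abs_of_nonneg (Umod_nonneg hγ1 _ _ _)]
            exact Umod_le_U hγ0 hγ1 hτ hna d (n + τ) _ (by linarith)
        have hI : (∫ z, Umod γ τ lam μa d (n + τ) (μ1 + sc τ n * z) ∂std)
            ≤ ∫ z, Umod γ τ lam μa d (n + τ) (μ2 + sc τ n * z) ∂std := by
          apply integral_mono_of_nonneg
          · exact ae_of_all _ fun z => Umod_nonneg hγ1 d (n + τ) _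
          · exact hint
          · exact ae_of_all _ fun z => hmono (by nlinarith [sc_nonneg τ n])
        nlinarith

lemma Umod_int (hγ0 : 0 ≤ γ) (hγ1 : γ < 1) (hτ : 0 < τ) (hna : 0 < na)
    (d : ℕ) (n μ σ : ℝ) (hn : na ≤ n) (hσ : |σ| ≤ sc τ na) :
    Integrable (fun z => Umod γ τ lam μa d n (μ + σ * z)) std := by
  apply Integrable.mono' (U_int hγ0 hγ1 hτ hna d n μ σ hn hσ)
  · exact ((Umod_mono hγ0 hγ1 hτ hna d n hn).measurable.comp
      (measurable_const.add (measurable_const.mul measurable_id))).aestronglyMeasurable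
  · refine ae_of_all _ fun z => ?_
    rw [Real.norm_eq_abs, abs_of_nonneg (Umod_nonneg hγ1 _ _ _)]
    exact Umod_le_U hγ0 hγ1 hτ hna d n _ hn

lemma U_convex (hγ0 : 0 ≤ γ) (hγ1 : γ < 1) (hτ : 0 < τ) (hna : 0 < na) :
    ∀ (d : ℕ) (n : ℝ), na ≤ n → ∀ x y a b : ℝ, 0 ≤ a → 0 ≤ b → a + b = 1 →
      U γ τ lam d n (a * x + b * y) ≤ a * U γ τ lam d n x + b * U γ τ lam d n y
  | 0, n, _hn => by
      intro x y a b ha hb hab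
      rw [U_zero, U_zero, U_zero]
      have h1 : (0:ℝ) < 1 - γ := by linarith
      have key : max (a * x + b * y - lam) 0 ≤ a * max (x - lam) 0 + b * max (y - lam) 0 := by
        apply max_le
        · have h2 : x - lam ≤ max (x - lam) 0 := le_max_left _ _
          have h3 : y - lam ≤ max (y - lam) 0 := le_max_left _ _
          have h4 : a * (x - lam) + b * (y - lam) = a * x + b * y - lam := by
            linear_combination (-lam) * hab
          linarith [mul_le_mul_of_nonneg_left h2 ha, mul_le_mul_of_nonneg_left h3 hb]
        · have := le_max_right (x - lam) (0:ℝ)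
          have := le_max_right (y - lam) (0:ℝ)
          nlinarith
      have heq : a * (max (x - lam) 0 / (1 - γ)) + b * (max (y - lam) 0 / (1 - γ))
          = (a * max (x - lam) 0 + b * max (y - lam) 0) / (1 - γ) := by ring
      rw [heq]
      exact div_le_div_of_nonneg_right key h1.le
  | d + 1, n, hn => by
      intro x y a b ha hb hab
      have hn0 : 0 < n := lt_of_lt_of_le hna hn
      rw [U_succ _ _ _ _ _ _ hτ hn0, U_succ _ _ _ _ _ _ hτ hn0, U_succ _ _ _ _ _ _ hτ hn0]
      have hscn : |sc τ n| ≤ sc τ na := by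
        rw [abs_of_nonneg (sc_nonneg τ n)]; exact sc_anti hτ hna hn
      have hintx := U_int (lam := lam) hγ0 hγ1 hτ hna d (n + τ) x (sc τ n) (by linarith) hscn
      have hinty := U_int (lam := lam) hγ0 hγ1 hτ hna d (n + τ) y (sc τ n) (by linarith) hscn
      set Ix := ∫ z, U γ τ lam d (n + τ) (x + sc τ n * z) ∂std with hIx
      set Iy := ∫ z, U γ τ lam d (n + τ) (y + sc τ n * z) ∂std with hIy
      have hIconv : (∫ z, U γ τ lam d (n + τ) (a * x + b * y + sc τ n * z) ∂std)
          ≤ a * Ix + b * Iy := by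
        have step : (∫ z, U γ τ lam d (n + τ) (a * x + b * y + sc τ n * z) ∂std)
            ≤ ∫ z, (a * U γ τ lam d (n + τ) (x + sc τ n * z)
                + b * U γ τ lam d (n + τ) (y + sc τ n * z)) ∂std := by
          apply integral_mono_of_nonneg
          · exact ae_of_all _ fun z => U_nonneg hγ1 d (n + τ) _
          · exact (hintx.const_mul a).add (hinty.const_mul b)
          · refine ae_of_all _ fun z => ?_
            show U γ τ lam d (n + τ) (a * x + b * y + sc τ n * z)
              ≤ a * U γ τ lam d (n + τ) (x + sc τ n * z)
                + b * U γ τ lam d (n + τ) (y + sc τ n * z)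
            have harg : a * x + b * y + sc τ n * z
                = a * (x + sc τ n * z) + b * (y + sc τ n * z) := by
              linear_combination sc τ n * z * hab.symm
            rw [harg]
            exact U_convex hγ0 hγ1 hτ hna d (n + τ) (by linarith) _ _ a b ha hb hab
        rwa [integral_add (hintx.const_mul a) (hinty.const_mul b),
          integral_const_mul, integral_const_mul] at step
      have hIxnn : 0 ≤ Ix := integral_nonneg fun z => U_nonneg hγ1 d (n + τ) _
      have hIynn : 0 ≤ Iy := integral_nonneg fun z => U_nonneg hγ1 d (n + τ) _
      apply max_le
      · have h2 : x - lam + γ * Ix ≤ max (x - lam + γ * Ix) 0 := le_max_left _ _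
        have h3 : y - lam + γ * Iy ≤ max (y - lam + γ * Iy) 0 := le_max_left _ _
        have h4 : a * (x - lam + γ * Ix) + b * (y - lam + γ * Iy)
            = a * x + b * y - lam + γ * (a * Ix + b * Iy) := by
          linear_combination (-lam) * hab
        linarith [mul_le_mul_of_nonneg_left h2 ha, mul_le_mul_of_nonneg_left h3 hb,
          mul_le_mul_of_nonneg_left hIconv hγ0]
      · have := le_max_right (x - lam + γ * Ix) (0:ℝ)
        have := le_max_right (y - lam + γ * Iy) (0:ℝ)
        nlinarith

lemma dilation (g : ℝ → ℝ) (hg : Measurable g) (hgnn : ∀ x, 0 ≤ g x)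
    (hconv : ∀ x y a b : ℝ, 0 ≤ a → 0 ≤ b → a + b = 1 → g (a * x + b * y) ≤ a * g x + b * g y)
    (μ s1 s2 : ℝ) (hs2 : 0 ≤ s2) (hs12 : s2 ≤ s1)
    (hint : Integrable (fun z => g (μ + s1 * z)) std) :
    ∫ z, g (μ + s2 * z) ∂std ≤ ∫ z, g (μ + s1 * z) ∂std := by
  rcases eq_or_lt_of_le (hs2.trans hs12) with h1 | h1
  · have hs1 : s2 = s1 := le_antisymm hs12 (by rw [← h1]; exact hs2)
    rw [hs1]
  set r := s2 / s1 with hr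
  have hr0 : 0 ≤ r := div_nonneg hs2 h1.le
  have hr1 : r ≤ 1 := (div_le_one h1).mpr hs12
  set a := (1 + r) / 2 with ha'
  set b := (1 - r) / 2 with hb'
  have ha : 0 ≤ a := by rw [ha']; linarith
  have hb : 0 ≤ b := by rw [hb']; linarith
  have hab : a + b = 1 := by rw [ha', hb']; ring
  have hneg : Integrable (fun z => g (μ - s1 * z)) std := by
    have hemb : MeasurableEmbedding (fun x : ℝ => -x) := by
      have h : (fun x : ℝ => -x) = ((-1 : ℝ) * ·) := by funext x; simp
      rw [h]; exact measurableEmbedding_mulLeft₀ (by norm_num)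
    have h2 : Integrable (fun z => g (μ + s1 * z)) (std.map (fun x : ℝ => -x)) := by
      rw [std_map_neg]; exact hint
    have h3 := (hemb.integrable_map_iff).mp h2
    have h4 : (fun z : ℝ => g (μ - s1 * z)) = (fun z => g (μ + s1 * z)) ∘ (fun x : ℝ => -x) := by
      funext z; simp only [Function.comp]; congr 1; ring
    rw [h4]; exact h3
  have hpt : ∀ z, g (μ + s2 * z) ≤ a * g (μ + s1 * z) + b * g (μ - s1 * z) := by
    intro z
    have harg : μ + s2 * z = a * (μ + s1 * z) + b * (μ - s1 * z) := by
      rw [ha', hb', hr]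
      field_simp
      ring
    rw [harg]
    exact hconv _ _ a b ha hb hab
  have hIneg : (∫ z, g (μ - s1 * z) ∂std) = ∫ z, g (μ + s1 * z) ∂std := by
    rw [← integral_neg_std (fun z => g (μ + s1 * z))]
    congr 1
    funext z
    congr 1
    ring
  calc (∫ z, g (μ + s2 * z) ∂std)
      ≤ ∫ z, (a * g (μ + s1 * z) + b * g (μ - s1 * z)) ∂std := by
        apply integral_mono_of_nonneg
        · exact ae_of_all _ fun z => hgnn _
        · exact (hint.const_mul a).add (hneg.const_mul b)
        · exact ae_of_all _ hpt
    _ = a * (∫ z, g (μ + s1 * z) ∂std) + b * (∫ z, g (μ - s1 * z) ∂std) := by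
        rw [integral_add (hint.const_mul a) (hneg.const_mul b), integral_const_mul,
          integral_const_mul]
    _ = ∫ z, g (μ + s1 * z) ∂std := by rw [hIneg]; linear_combination (∫ z, g (μ + s1 * z) ∂std) * hab

lemma integral_affine (μ s lam' c : ℝ) :
    ∫ z, (μ + s * z - lam') / c ∂std = (μ - lam') / c := by
  have h : (fun z : ℝ => (μ + s * z - lam') / c) = fun z => (μ - lam') / c + (s / c) * z := by
    funext z; ring
  rw [h, integral_add (integrable_const _) (integrable_id_std.const_mul _),
    integral_const_mul, integral_id_std, integral_const]
  simp [measure_univ]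

lemma stage (hγ0 : 0 ≤ γ) (hγ1 : γ < 1) (hτ : 0 < τ) (hna : 0 < na) :
    ∀ (d : ℕ) (n μ : ℝ), na ≤ n → U γ τ lam d (n + τ) μ ≤ U γ τ lam (d + 1) n μ
  | 0, n, μ, hn => by
      have hn0 : 0 < n := lt_of_lt_of_le hna hn
      rw [U_succ _ _ _ _ _ _ hτ hn0, U_zero]
      have h1 : (0:ℝ) < 1 - γ := by linarith
      have hscn : |sc τ n| ≤ sc τ na := by
        rw [abs_of_nonneg (sc_nonneg τ n)]; exact sc_anti hτ hna hn
      set I := ∫ z, U γ τ lam 0 (n + τ) (μ + sc τ n * z) ∂std with hI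
      have hInn : 0 ≤ I := integral_nonneg fun z => U_nonneg hγ1 0 (n + τ) _
      have hlow : (μ - lam) / (1 - γ) ≤ I := by
        have hLint : Integrable (fun z : ℝ => (μ + sc τ n * z - lam) / (1 - γ)) std := by
          have hL : (fun z : ℝ => (μ + sc τ n * z - lam) / (1 - γ))
              = fun z => (μ - lam) / (1 - γ) + (sc τ n / (1 - γ)) * z := funext fun z => by ring
          rw [hL]
          exact (integrable_const _).add (integrable_id_std.const_mul _)
        have hm := integral_mono hLint
          (U_int (lam := lam) hγ0 hγ1 hτ hna 0 (n + τ) μ (sc τ n) (by linarith) hscn)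
          (fun z => by
            rw [U_zero]
            exact div_le_div_of_nonneg_right (le_max_left _ _) h1.le)
        rwa [integral_affine μ (sc τ n) lam (1 - γ)] at hm
      rcases le_or_gt μ lam with hml | hml
      · rw [max_eq_right (by linarith)]
        rw [zero_div]
        exact le_max_right _ _
      · rw [max_eq_left (by linarith)]
        have key : (μ - lam) / (1 - γ) ≤ μ - lam + γ * I := by
          have heq : μ - lam + γ * ((μ - lam) / (1 - γ)) = (μ - lam) / (1 - γ) := by
            field_simp
            ring
          nlinarith [mul_le_mul_of_nonneg_left hlow hγ0]
        exact key.trans (le_max_left _ _)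
  | d + 1, n, μ, hn => by
      have hn0 : 0 < n := lt_of_lt_of_le hna hn
      have hn0' : 0 < n + τ := by linarith
      rw [U_succ _ _ _ _ _ _ hτ hn0', U_succ _ _ _ _ _ _ hτ hn0]
      have hscn : |sc τ n| ≤ sc τ na := by
        rw [abs_of_nonneg (sc_nonneg τ n)]; exact sc_anti hτ hna hn
      have hIL : (∫ z, U γ τ lam d (n + τ + τ) (μ + sc τ (n + τ) * z) ∂std)
          ≤ ∫ z, U γ τ lam (d + 1) (n + τ) (μ + sc τ n * z) ∂std := by
        calc (∫ z, U γ τ lam d (n + τ + τ) (μ + sc τ (n + τ) * z) ∂std)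
            ≤ ∫ z, U γ τ lam d (n + τ + τ) (μ + sc τ n * z) ∂std := by
              apply dilation (U γ τ lam d (n + τ + τ))
                ((U_mono hγ0 hγ1 hτ hna d (n + τ + τ) (by linarith)).measurable)
                (fun x => U_nonneg hγ1 d (n + τ + τ) x)
                (fun x y a b ha hb hab =>
                  U_convex hγ0 hγ1 hτ hna d (n + τ + τ) (by linarith) x y a b ha hb hab)
                μ (sc τ n) (sc τ (n + τ)) (sc_nonneg τ (n + τ)) (sc_anti hτ hn0 (by linarith))
              exact U_int hγ0 hγ1 hτ hna d (n + τ + τ) μ (sc τ n) (by linarith) hscn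
            _ ≤ ∫ z, U γ τ lam (d + 1) (n + τ) (μ + sc τ n * z) ∂std := by
              apply integral_mono_of_nonneg
              · exact ae_of_all _ fun z => U_nonneg hγ1 d (n + τ + τ) _
              · exact U_int hγ0 hγ1 hτ hna (d + 1) (n + τ) μ (sc τ n) (by linarith) hscn
              · exact ae_of_all _ fun z => stage hγ0 hγ1 hτ hna d (n + τ) _ (by linarith)
      apply max_le_max _ le_rfl
      nlinarith [mul_le_mul_of_nonneg_left hIL hγ0]

lemma reach (hγ0 : 0 ≤ γ) (hγ1 : γ < 1) (hτ : 0 < τ) (hna : 0 < na)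
    (μ : ℝ) (hμ : μ ≤ μa) :
    ∀ (k d : ℕ), U γ τ lam d (na + (k : ℝ) * τ) μ ≤ U γ τ lam (d + k) na μa
  | 0, d => by
      simpa using U_mono hγ0 hγ1 hτ hna d na le_rfl hμ
  | k + 1, d => by
      have harg : na + ((k : ℕ) + 1 : ℝ) * τ = (na + (k : ℝ) * τ) + τ := by ring
      have hge : na ≤ na + (k : ℝ) * τ := by
        have : (0:ℝ) ≤ (k : ℝ) * τ := by positivity
        linarith
      have h1 : U γ τ lam d (na + ((k:ℕ) + 1 : ℝ) * τ) μ ≤ U γ τ lam (d + 1) (na + (k : ℝ) * τ) μ := by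
        rw [harg]
        exact stage hγ0 hγ1 hτ hna d (na + (k : ℝ) * τ) μ hge
      have h2 := reach hγ0 hγ1 hτ hna μ hμ k (d + 1)
      have h3 : d + 1 + k = d + (k + 1) := by omega
      rw [h3] at h2
      calc U γ τ lam d (na + ((k + 1 : ℕ) : ℝ) * τ) μ
          = U γ τ lam d (na + ((k:ℕ) + 1 : ℝ) * τ) μ := by push_cast; ring_nf
        _ ≤ U γ τ lam (d + (k + 1)) na μa := h1.trans h2

lemma diff_le (hγ0 : 0 ≤ γ) (hγ1 : γ < 1) (hτ : 0 < τ) (hna : 0 < na) (N : ℕ) :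
    ∀ (d : ℕ), d ≤ N → ∀ μ : ℝ,
      U γ τ lam d (na + ((N - d : ℕ) : ℝ) * τ) μ
        - Umod γ τ lam μa d (na + ((N - d : ℕ) : ℝ) * τ) μ
      ≤ if μ < μa then U γ τ lam N na μa else γ * U γ τ lam N na μa
  | 0, _hd, μ => by
      by_cases hμ : μ < μa
      · rw [if_pos hμ, Umod_zero, if_pos hμ, sub_zero]
        have h := reach (lam := lam) hγ0 hγ1 hτ hna μ hμ.le (N - 0) 0
        simpa using h
      · rw [if_neg hμ, Umod_zero, if_neg hμ, U_zero, sub_self]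
        exact mul_nonneg hγ0 (U_nonneg hγ1 N na μa)
  | d + 1, hd, μ => by
      have hτk : (0:ℝ) ≤ ((N - (d+1) : ℕ) : ℝ) * τ := by positivity
      set n : ℝ := na + ((N - (d+1) : ℕ) : ℝ) * τ with hn
      have hnge : na ≤ n := by rw [hn]; linarith
      have hn0 : 0 < n := lt_of_lt_of_le hna hnge
      have hstep : n + τ = na + ((N - d : ℕ) : ℝ) * τ := by
        have h1 : N - d = (N - (d + 1)) + 1 := by omega
        rw [hn, h1]
        push_cast
        ring
      by_cases hμ : μ < μa
      · rw [if_pos hμ, Umod_succ _ _ _ _ _ _ _ hτ hn0, if_pos hμ, sub_zero]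
        have h := reach (lam := lam) hγ0 hγ1 hτ hna μ hμ.le (N - (d+1)) (d + 1)
        have h2 : d + 1 + (N - (d + 1)) = N := by omega
        rw [h2] at h
        exact h
      · rw [if_neg hμ, U_succ _ _ _ _ _ _ hτ hn0, Umod_succ _ _ _ _ _ _ _ hτ hn0, if_neg hμ]
        have hεnn : 0 ≤ U γ τ lam N na μa := U_nonneg hγ1 N na μa
        have hscn : |sc τ n| ≤ sc τ na := by
          rw [abs_of_nonneg (sc_nonneg τ n)]; exact sc_anti hτ hna hnge
        have hintU := U_int (lam := lam) hγ0 hγ1 hτ hna d (n + τ) μ (sc τ n) (by linarith) hscn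
        have hintM := Umod_int (lam := lam) (μa := μa) hγ0 hγ1 hτ hna d (n + τ) μ (sc τ n)
          (by linarith) hscn
        have hIdiff : (∫ z, U γ τ lam d (n + τ) (μ + sc τ n * z) ∂std)
            - (∫ z, Umod γ τ lam μa d (n + τ) (μ + sc τ n * z) ∂std)
            ≤ U γ τ lam N na μa := by
          rw [← integral_sub hintU hintM]
          have hconst : (∫ _ : ℝ, U γ τ lam N na μa ∂std) = U γ τ lam N na μa := by
            rw [integral_const]; simp [measure_univ]
          rw [← hconst]
          apply integral_mono (hintU.sub hintM) (integrable_const _)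
          intro z
          have hIH := diff_le hγ0 hγ1 hτ hna N d (by omega) (μ + sc τ n * z)
          rw [← hstep] at hIH
          have : (if μ + sc τ n * z < μa then U γ τ lam N na μa else γ * U γ τ lam N na μa)
              ≤ U γ τ lam N na μa := by
            split
            · exact le_rfl
            · nlinarith
          exact le_trans hIH this
        have hmax := max_sub_max_le_max
          (μ - lam + γ * ∫ z, U γ τ lam d (n + τ) (μ + sc τ n * z) ∂std) 0
          (μ - lam + γ * ∫ z, Umod γ τ lam μa d (n + τ) (μ + sc τ n * z) ∂std) 0
        rw [sub_zero] at hmax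
        apply hmax.trans
        apply max_le
        · nlinarith [mul_le_mul_of_nonneg_left hIdiff hγ0]
        · exact mul_nonneg hγ0 hεnn

/-- Retirement below the initial mean loses nothing: for the Gaussian
one-armed bandit with initial state `(μ_a, n_a)` and horizon `N ≥ 1`, the
value at the initial state is zero for the original dynamic programme if and
only if it is zero for the programme modified to retire whenever the posterior
mean is strictly below `μ_a`. Hence both calibrations give the same Gittins
index. -/
theorem nmab_retirement_below_initial_mean (γ τ lam μa na : ℝ) (N : ℕ)
    (hγ0 : 0 ≤ γ) (hγ1 : γ < 1) (hτ : 0 < τ) (hna : 0 < na) (hN : 1 ≤ N) :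
    U γ τ lam N na μa = 0 ↔ Umod γ τ lam μa N na μa = 0 := by
  constructor
  · intro h
    have h1 := Umod_le_U (lam := lam) (μa := μa) hγ0 hγ1 hτ hna N na μa le_rfl
    have h2 := Umod_nonneg (lam := lam) (μa := μa) (τ := τ) hγ1 N na μa
    rw [h] at h1
    linarith
  · intro h
    have hεnn : 0 ≤ U γ τ lam N na μa := U_nonneg hγ1 N na μa
    have hd := diff_le (lam := lam) (μa := μa) hγ0 hγ1 hτ hna N N le_rfl μa
    have hz : (N - N : ℕ) = 0 := by omega
    rw [hz] at hd
    simp only [Nat.cast_zero, zero_mul, add_zero] at hd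
    rw [h, sub_zero, if_neg (lt_irrefl μa)] at hd
    nlinarith

end main
end
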